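/- For all x, y ∈ ℝ, |b(x) − b(y)| ≤ (3/2)·|x − y|, where b(x) = sin(x)/√(2 − cos(x)); that is, b is Lipschitz continuous with Lipschitz constant 3/2. -/

import Mathlib

/-- The function `b(x) = sin x / √(2 - cos x)`. -/
noncomputable def b (x : ℝ) : ℝ := Real.sin x / Real.sqrt (2 - Real.cos x)

noncomputable def bderiv (x : ℝ) : ℝ :=
  (Real.cos x * Real.sqrt (2 - Real.cos x) -
    Real.sin x * (Real.sin x / (2 * Real.sqrt (2 - Real.cos x)))) /
    (Real.sqrt (2 - Real.cos x)) ^ 2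

lemma two_sub_cos_pos (x : ℝ) : (0:ℝ) < 2 - Real.cos x := by
  have := Real.cos_le_one x; linarith

lemma sqrt_pos' (x : ℝ) : 0 < Real.sqrt (2 - Real.cos x) :=
  Real.sqrt_pos.mpr (two_sub_cos_pos x)

lemma hasDerivAt_b (x : ℝ) : HasDerivAt b (bderiv x) x := by
  have hpos := two_sub_cos_pos x
  have hs := sqrt_pos' x
  have hinner : HasDerivAt (fun y => 2 - Real.cos y) (Real.sin x) x := by
    simpa [Pi.sub_def] using (hasDerivAt_const x (2:ℝ)).sub (Real.hasDerivAt_cos x)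
  have hsqrt : HasDerivAt (fun y => Real.sqrt (2 - Real.cos y))
      (Real.sin x / (2 * Real.sqrt (2 - Real.cos x))) x := by
    have := (Real.hasDerivAt_sqrt (ne_of_gt hpos)).comp x hinner
    simpa [Function.comp_def, div_eq_mul_inv, mul_inv, mul_comm, mul_assoc] using this
  have := (Real.hasDerivAt_sin x).div hsqrt (ne_of_gt hs)
  show HasDerivAt (fun y => Real.sin y / Real.sqrt (2 - Real.cos y)) (bderiv x) x
  simpa [b, bderiv, Pi.div_def] using this

lemma bderiv_bound (x : ℝ) : |bderiv x| ≤ 3/2 := by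
  have hpos := two_sub_cos_pos x
  have hs := sqrt_pos' x
  set c := Real.cos x with hc
  set s := Real.sqrt (2 - Real.cos x) with hsdef
  have hs2 : s ^ 2 = 2 - c := Real.sq_sqrt (le_of_lt hpos)
  have hs1 : 1 ≤ s := by
    nlinarith [Real.cos_le_one x, hs]
  have hsin : Real.sin x ^ 2 = 1 - c ^ 2 := by
    have := Real.sin_sq_add_cos_sq x; nlinarith
  have key : bderiv x = (4 * c - c ^ 2 - 1) / (2 * s ^ 3) := by
    rw [bderiv, ← hsdef, ← hc, div_eq_div_iff (by positivity) (by positivity)]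
    have e : Real.sin x * (Real.sin x / (2 * s)) * (2 * s ^ 3) = Real.sin x ^ 2 * s ^ 2 := by
      field_simp
    linear_combination (-1) * e - s ^ 2 * hsin + 2 * c * s ^ 2 * hs2
  rw [key, abs_div, abs_of_pos (by positivity : (0:ℝ) < 2 * s ^ 3),
    div_le_iff₀ (by positivity)]
  have hc1 : -1 ≤ c := Real.neg_one_le_cos x
  have hc2 : c ≤ 1 := Real.cos_le_one x
  rcases abs_cases (4 * c - c ^ 2 - 1) with ⟨h, _⟩ | ⟨h, _⟩ <;> rw [h] <;>
    nlinarith [hs1, hs2, sq_nonneg (s - 1), sq_nonneg (c - 1), sq_nonneg (c + 1),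
      mul_le_mul_of_nonneg_left hs1 (by positivity : (0:ℝ) ≤ 3 * (2 - c))]

theorem b_lipschitz : ∀ x y : ℝ, |b x - b y| ≤ (3/2) * |x - y| := by
  intro x y
  have := Convex.norm_image_sub_le_of_norm_hasDerivWithin_le
    (f := b) (f' := bderiv) (C := 3/2) (s := Set.univ)
    (fun z _ => (hasDerivAt_b z).hasDerivWithinAt)
    (fun z _ => by simpa [Real.norm_eq_abs] using bderiv_bound z)
    convex_univ (Set.mem_univ y) (Set.mem_univ x)
  simpa [Real.norm_eq_abs] using this
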